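/- For the sun graph S_k on n = 2k vertices (k ≥ 3), the zero forcing number equals k = n/2. -/

import Mathlib

open SimpleGraph

section ZF
variable {V : Type*}

/-- One round of the zero forcing color change rule applied to the blue set `S`. -/
def forceStep (G : SimpleGraph V) (S : Set V) : Set V :=
  S ∪ {w | ∃ u ∈ S, G.Adj u w ∧ ∀ x, G.Adj u x → x ∉ S → x = w}

/-- `S` is a zero forcing set: repeatedly applying the color change rule turns all
vertices blue; equivalently every forcing-closed superset of `S` is everything. -/
def IsZeroForcingSet (G : SimpleGraph V) (S : Set V) : Prop :=
  ∀ T : Set V, S ⊆ T → forceStep G T ⊆ T → T = Set.univ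

/-- The zero forcing number `Z(G)`. -/
noncomputable def zeroForcingNumber (G : SimpleGraph V) [Fintype V] : ℕ :=
  sInf {n | ∃ S : Finset V, S.card = n ∧ IsZeroForcingSet G ↑S}

/-- The list `l` enumerates an induced path of `G` (a single vertex counts). -/
def IsListPath (G : SimpleGraph V) (l : List V) : Prop :=
  l.Nodup ∧ ∀ i j : Fin l.length,
    (G.Adj (l.get i) (l.get j) ↔ (i.val + 1 = j.val ∨ j.val + 1 = i.val))

/-- The set `P` induces a path in `G`. -/
def IsInducedPathSet (G : SimpleGraph V) (P : Set V) : Prop :=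
  ∃ l : List V, IsListPath G l ∧ {v | v ∈ l} = P

/-- The path cover number `P(G)`: the minimum number of parts in a partition of the
vertex set into sets each inducing a path. -/
noncomputable def pathCoverNumber (G : SimpleGraph V) [Fintype V] [DecidableEq V] : ℕ :=
  sInf {n | ∃ P : Finpartition (Finset.univ : Finset V),
    P.parts.card = n ∧ ∀ p ∈ P.parts, IsInducedPathSet G ↑p}

/-- `G` is 2-connected: at least 3 vertices, connected, and deleting any vertex
leaves a connected graph. -/
def IsTwoConnected (G : SimpleGraph V) [Fintype V] : Prop :=
  3 ≤ Fintype.card V ∧ G.Connected ∧ ∀ v : V, (G.induce {w : V | w ≠ v}).Connected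

/-- `σ` places the vertices of `G` on a circle (in the order given by `Fin`) so that no
two edges, drawn as chords, cross; this witnesses outerplanarity of `G`. -/
def IsOuterplanarEmbedding (G : SimpleGraph V) [Fintype V]
    (σ : V ≃ Fin (Fintype.card V)) : Prop :=
  ∀ a b c d : V, G.Adj a b → G.Adj c d →
    ¬(σ a < σ c ∧ σ c < σ b ∧ σ b < σ d)

/-- A graph is outerplanar iff its vertices can be placed on a circle with all
edges drawn as pairwise non-crossing chords. -/
def IsOuterplanar (G : SimpleGraph V) [Fintype V] : Prop :=
  ∃ σ : V ≃ Fin (Fintype.card V), IsOuterplanarEmbedding G σ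

/-- `v` is the cyclic successor of `u` among the elements of `F`, with respect to the
circular order induced by `σ`. -/
def nextIn {n : ℕ} (σ : V ≃ Fin n) (F : Finset V) (u v : V) : Prop :=
  u ∈ F ∧ v ∈ F ∧ u ≠ v ∧
    ((σ u < σ v ∧ ∀ w ∈ F, σ u < σ w → σ v ≤ σ w) ∨
     ((∀ w ∈ F, σ w ≤ σ u) ∧ (∀ w ∈ F, σ v ≤ σ w)))

/-- `F` is (the vertex set of) a bounded face of the outerplanar embedding `σ` of the
2-connected outerplanar graph `G`: in the circular order, consecutive members of `F`
are exactly the adjacent pairs inside `F` (so `F` spans a chordless polygon). -/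
def IsFace (G : SimpleGraph V) [Fintype V] (σ : V ≃ Fin (Fintype.card V))
    (F : Finset V) : Prop :=
  3 ≤ F.card ∧ ∀ u ∈ F, ∀ v ∈ F,
    (G.Adj u v ↔ (nextIn σ F u v ∨ nextIn σ F v u))

/-- The weak dual of the embedded outerplanar graph `G`: vertices are the bounded
faces, two faces being adjacent iff they share an edge of `G`. -/
def weakDual (G : SimpleGraph V) [Fintype V] (σ : V ≃ Fin (Fintype.card V)) :
    SimpleGraph {F : Finset V // IsFace G σ F} where
  Adj F₁ F₂ := F₁ ≠ F₂ ∧ ∃ u v, G.Adj u v ∧ u ∈ F₁.1 ∧ u ∈ F₂.1 ∧ v ∈ F₁.1 ∧ v ∈ F₂.1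
  symm := ⟨by
    rintro F₁ F₂ ⟨hne, u, v, ha, h1, h2, h3, h4⟩
    exact ⟨hne.symm, u, v, ha, h2, h1, h4, h3⟩⟩
  loopless := ⟨by rintro F ⟨hne, -⟩; exact hne rfl⟩

/-- The degree of a face in the weak dual. -/
noncomputable def dualDeg (G : SimpleGraph V) [Fintype V]
    (σ : V ≃ Fin (Fintype.card V)) (F : {F : Finset V // IsFace G σ F}) : ℕ :=
  ((weakDual G σ).neighborSet F).ncard

/-- A leaf face: a face which is a leaf of the weak dual tree. -/
def IsLeafFace (G : SimpleGraph V) [Fintype V] (σ : V ≃ Fin (Fintype.card V))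
    (F : {F : Finset V // IsFace G σ F}) : Prop :=
  dualDeg G σ F = 1

/-- `n_ℓ`: the number of leaves of the weak dual. -/
noncomputable def numDualLeaves (G : SimpleGraph V) [Fintype V]
    (σ : V ≃ Fin (Fintype.card V)) : ℕ :=
  Nat.card {F : {F : Finset V // IsFace G σ F} // IsLeafFace G σ F}

end ZF

section FT
variable {V : Type*} [Fintype V]

/-- Branch faces: faces of weak-dual degree 2 that are adjacent to a leaf face or to
another branch face. -/
inductive IsBranchFace (G : SimpleGraph V) (σ : V ≃ Fin (Fintype.card V)) :
    {F : Finset V // IsFace G σ F} → Prop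
  | leaf (F F' : {F : Finset V // IsFace G σ F}) :
      dualDeg G σ F = 2 → (weakDual G σ).Adj F F' → IsLeafFace G σ F' →
      IsBranchFace G σ F
  | branch (F F' : {F : Finset V // IsFace G σ F}) :
      dualDeg G σ F = 2 → (weakDual G σ).Adj F F' → IsBranchFace G σ F' →
      IsBranchFace G σ F

/-- Limb faces: faces of weak-dual degree at least 3 adjacent to a leaf or branch face. -/
def IsLimbFace (G : SimpleGraph V) (σ : V ≃ Fin (Fintype.card V))
    (F : {F : Finset V // IsFace G σ F}) : Prop :=
  3 ≤ dualDeg G σ F ∧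
    ∃ F', (weakDual G σ).Adj F F' ∧ (IsLeafFace G σ F' ∨ IsBranchFace G σ F')

/-- Trunk faces: faces of weak-dual degree at least 2 that are adjacent to no leaf
face and no branch face. -/
def IsTrunkFace (G : SimpleGraph V) (σ : V ≃ Fin (Fintype.card V))
    (F : {F : Finset V // IsFace G σ F}) : Prop :=
  2 ≤ dualDeg G σ F ∧
    ∀ F', (weakDual G σ).Adj F F' → ¬(IsLeafFace G σ F' ∨ IsBranchFace G σ F')

/-- The vertices of the foliage of `G`: vertices lying on a leaf, branch, or limb face. -/
def foliageSet (G : SimpleGraph V) (σ : V ≃ Fin (Fintype.card V)) : Set V :=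
  {v | ∃ F : {F : Finset V // IsFace G σ F},
    (IsLeafFace G σ F ∨ IsBranchFace G σ F ∨ IsLimbFace G σ F) ∧ v ∈ F.1}

/-- The vertices of the trunk of `G`: vertices lying on a trunk face. -/
def trunkSet (G : SimpleGraph V) (σ : V ≃ Fin (Fintype.card V)) : Set V :=
  {v | ∃ F : {F : Finset V // IsFace G σ F}, IsTrunkFace G σ F ∧ v ∈ F.1}

/-- Boundary vertices: vertices in both the foliage and the trunk. -/
def boundarySet (G : SimpleGraph V) (σ : V ≃ Fin (Fintype.card V)) : Set V :=
  foliageSet G σ ∩ trunkSet G σ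

end FT

/-- The sun graph `S_k` on `2k` vertices: a cycle `v_0, …, v_{k-1}` (the left
summands) together with vertices `u_0, …, u_{k-1}` (the right summands) where `u_i`
is adjacent to `v_i` and `v_{i+1}` (indices mod `k`). -/
def sunGraph (k : ℕ) : SimpleGraph (Fin k ⊕ Fin k) :=
  SimpleGraph.fromRel (fun x y =>
    match x, y with
    | Sum.inl i, Sum.inl j => (j : ℕ) = ((i : ℕ) + 1) % k
    | Sum.inr i, Sum.inl j => (j : ℕ) = (i : ℕ) ∨ (j : ℕ) = ((i : ℕ) + 1) % k
    | _, _ => False)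

namespace SunZF
open Fin.CommRing Fin.NatCast
variable {k : ℕ} [NeZero k]

lemma hv1 (hk : 3 ≤ k) : (1 : Fin k).val = 1 := by
  rw [Fin.val_one']; exact Nat.mod_eq_of_lt (by omega)

lemma hkey (hk : 3 ≤ k) (i j : Fin k) : ((j : ℕ) = ((i:ℕ)+1) % k) ↔ j = i + 1 := by
  rw [Fin.ext_iff, Fin.val_add, hv1 hk]

lemma h10 (hk : 3 ≤ k) : (1 : Fin k) ≠ 0 := by
  simp only [Ne, Fin.ext_iff, hv1 hk]; simp

lemma h20 (hk : 3 ≤ k) : (1 + 1 : Fin k) ≠ 0 := by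
  simp only [Ne, Fin.ext_iff, Fin.val_add, hv1 hk]
  rw [Nat.mod_eq_of_lt (by omega)]; simp

lemma add_one_ne (hk : 3 ≤ k) (i : Fin k) : i + 1 ≠ i := by
  intro h
  have : (1 : Fin k) = 0 := by
    have := congrArg (· - i) h
    simpa [add_comm, add_sub_cancel_right, sub_self] using this
  exact h10 hk this

lemma sub_one_ne (hk : 3 ≤ k) (i : Fin k) : i - 1 ≠ i := by
  intro h
  have : (1 : Fin k) = 0 := by
    have := congrArg (fun x => i - x) h
    simpa using this
  exact h10 hk this

lemma sun_adj_inr (hk : 3 ≤ k) (i : Fin k) (z : Fin k ⊕ Fin k) :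
    (sunGraph k).Adj (Sum.inr i) z ↔ z = Sum.inl i ∨ z = Sum.inl (i + 1) := by
  cases z with
  | inl j =>
      simp only [sunGraph, SimpleGraph.fromRel_adj]
      rw [hkey hk i j]
      constructor
      · rintro ⟨-, (h | h) | h⟩
        · left; exact congrArg _ (Fin.ext h)
        · right; exact congrArg _ h
        · exact absurd h (by simp)
      · rintro (h | h) <;> simp_all [Fin.ext_iff]
  | inr j =>
      simp only [sunGraph, SimpleGraph.fromRel_adj]
      constructor
      · rintro ⟨-, h | h⟩ <;> exact absurd h (by simp)
      · rintro (h | h) <;> simp_all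

lemma sun_adj_inl (hk : 3 ≤ k) (j : Fin k) (z : Fin k ⊕ Fin k) :
    (sunGraph k).Adj (Sum.inl j) z ↔
      z = Sum.inl (j + 1) ∨ z = Sum.inl (j - 1) ∨ z = Sum.inr j ∨ z = Sum.inr (j - 1) := by
  cases z with
  | inl j' =>
      simp only [sunGraph, SimpleGraph.fromRel_adj]
      rw [hkey hk j j', hkey hk j' j]
      constructor
      · rintro ⟨hne, h | h⟩
        · left; exact congrArg _ h
        · right; left
          have : j' = j - 1 := by rw [h]; ring
          exact congrArg _ this
      · rintro (h | h | h | h)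
        · rcases Sum.inl.inj h with rfl
          exact ⟨by simpa using (add_one_ne hk j).symm, Or.inl rfl⟩
        · rcases Sum.inl.inj h with rfl
          refine ⟨by simpa using (sub_one_ne hk j).symm, Or.inr ?_⟩
          ring
        · simp at h
        · simp at h
  | inr i =>
      simp only [sunGraph, SimpleGraph.fromRel_adj]
      constructor
      · rintro ⟨-, h | h⟩
        · exact absurd h (by simp)
        · rcases h with h | h
          · right; right; left
            have : i = j := Fin.ext h.symm
            exact congrArg _ this
          · right; right; right
            have : j = i + 1 := (hkey hk i j).1 h
            have : i = j - 1 := by rw [this]; ring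
            exact congrArg _ this
      · rintro (h | h | h | h)
        · simp at h
        · simp at h
        · rcases Sum.inr.inj h with rfl
          exact ⟨by simp, Or.inr (Or.inl rfl)⟩
        · rcases Sum.inr.inj h with rfl
          refine ⟨by simp, Or.inr (Or.inr ?_)⟩
          rw [hkey hk (j-1) j]; ring

lemma hvneg1 (hk : 3 ≤ k) : ((-1 : Fin k)).val = k - 1 := by
  have h : (-1 : Fin k) = 0 - 1 := by ring
  rw [h, Fin.sub_def, hv1 hk]
  simp [Nat.mod_eq_of_lt (show k - 1 < k by omega)]

def upperSet (k : ℕ) [NeZero k] : Finset (Fin k ⊕ Fin k) :=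
  insert (Sum.inl 0) ((Finset.univ.erase (-1 : Fin k)).image Sum.inr)

lemma upperSet_card (hk : 3 ≤ k) : (upperSet k).card = k := by
  rw [upperSet, Finset.card_insert_of_notMem (by simp),
    Finset.card_image_of_injective _ Sum.inr_injective,
    Finset.card_erase_of_mem (Finset.mem_univ _)]
  simp [Fintype.card_fin]
  omega

lemma upperSet_zfs (hk : 3 ≤ k) : IsZeroForcingSet (sunGraph k) ↑(upperSet k) := by
  intro T hST hcl
  have h0 : Sum.inl (0 : Fin k) ∈ T := hST (by simp [upperSet])
  have hR : ∀ i : Fin k, i ≠ -1 → Sum.inr i ∈ T := fun i hi =>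
    hST (by simp [upperSet, hi])
  have hL : ∀ n : ℕ, ∀ hn : n < k, Sum.inl (⟨n, hn⟩ : Fin k) ∈ T := by
    intro n
    induction n with
    | zero => intro hn; exact h0
    | succ n ih =>
      intro hn
      have hn' : n < k := by omega
      have hi : Sum.inl (⟨n, hn'⟩ : Fin k) ∈ T := ih hn'
      have hiR : Sum.inr (⟨n, hn'⟩ : Fin k) ∈ T := by
        apply hR
        simp only [Ne, Fin.ext_iff, hvneg1 hk]
        omega
      have hsucc : (⟨n, hn'⟩ : Fin k) + 1 = ⟨n+1, hn⟩ := by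
        rw [Fin.ext_iff, Fin.val_add, hv1 hk]
        exact Nat.mod_eq_of_lt hn
      apply hcl
      refine Or.inr ⟨Sum.inr (⟨n, hn'⟩ : Fin k), hiR, ?_, ?_⟩
      · rw [sun_adj_inr hk, hsucc]; right; rfl
      · intro x hx hxT
        rcases (sun_adj_inr hk _ x).1 hx with rfl | rfl
        · exact absurd hi hxT
        · rw [hsucc]
    
  have hLall : ∀ j : Fin k, Sum.inl j ∈ T := fun j => by
    have := hL j.val j.isLt; simpa using this
  have hRlast : Sum.inr (-1 : Fin k) ∈ T := by
    apply hcl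
    refine Or.inr ⟨Sum.inl (0 : Fin k), h0, ?_, ?_⟩
    · rw [sun_adj_inl hk]
      right; right; right
      norm_num
    · intro x hx hxT
      rcases (sun_adj_inl hk _ x).1 hx with rfl | rfl | rfl | rfl
      · exact absurd (hLall _) hxT
      · exact absurd (hLall _) hxT
      · exfalso; apply hxT; apply hR; simp only [Ne, Fin.ext_iff, hvneg1 hk, Fin.val_zero]; omega
      · norm_num
  ext x
  simp only [Set.mem_univ, iff_true]
  cases x with
  | inl j => exact hLall j
  | inr i =>
    by_cases hi : i = -1
    · exact hi ▸ hRlast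
    · exact hR i hi

lemma vsub (a b : Fin k) : (a - b).val = (a.val + (k - b.val)) % k := by
  rw [Fin.sub_def]
  exact congrArg (· % k) (Nat.add_comm _ _)

lemma sun_lower (hk : 3 ≤ k) (S : Finset (Fin k ⊕ Fin k))
    (hS : IsZeroForcingSet (sunGraph k) ↑S) : k ≤ S.card := by
  by_contra hlt
  push_neg at hlt
  classical
  -- index sets
  set D : Finset (Fin k) := Finset.univ.filter (fun i => Sum.inl i ∈ S) with hD
  set Uf : Finset (Fin k) := Finset.univ.filter (fun i => Sum.inr i ∈ S) with hUf
  set Gc : Finset (Fin k) := Finset.univ.filter (fun i => Sum.inr i ∉ S) with hGc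
  have hDUf : D.card + Uf.card ≤ S.card := by
    have hsub : (D.image Sum.inl) ∪ (Uf.image Sum.inr) ⊆ S := by
      intro x hx
      rcases Finset.mem_union.1 hx with hx | hx <;>
        · obtain ⟨a, ha, rfl⟩ := Finset.mem_image.1 hx
          simp only [hD, hUf, Finset.mem_filter] at ha
          exact ha.2
    have hdisj : Disjoint (D.image Sum.inl) (Uf.image Sum.inr) := by
      simp [Finset.disjoint_left]
    calc D.card + Uf.card
        = (D.image Sum.inl).card + (Uf.image Sum.inr).card := by
          rw [Finset.card_image_of_injective _ Sum.inl_injective,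
            Finset.card_image_of_injective _ Sum.inr_injective]
      _ = ((D.image Sum.inl) ∪ (Uf.image Sum.inr)).card :=
          (Finset.card_union_of_disjoint hdisj).symm
      _ ≤ S.card := Finset.card_le_card hsub
  have hGcUf : Gc.card + Uf.card = k := by
    have h1 : Gc = Finset.univ \ Uf := by
      rw [hGc, hUf, Finset.filter_not]
    have h2 : Uf ⊆ Finset.univ := Finset.subset_univ _
    have h3 := Finset.card_sdiff_of_subset h2
    have h4 := Finset.card_le_card h2
    simp only [Finset.card_univ, Fintype.card_fin] at h3 h4
    rw [h1, h3]
    omega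
  have hDGc : D.card < Gc.card := by omega
  -- a free right-vertex exists
  have hGcne : ∃ s₀, Sum.inr s₀ ∉ S := by
    have : 0 < Gc.card := by omega
    obtain ⟨s₀, hs₀⟩ := Finset.card_pos.1 this
    exact ⟨s₀, (Finset.mem_filter.1 hs₀).2⟩
  obtain ⟨s₀, hs₀⟩ := hGcne
  have hex : ∀ d : Fin k, ∃ r : ℕ, Sum.inr (d - 1 - (r : Fin k)) ∉ S := by
    intro d
    refine ⟨(d - 1 - s₀).val, ?_⟩
    rw [Fin.cast_val_eq_self]
    have : d - 1 - (d - 1 - s₀) = s₀ := by ring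
    rw [this]; exact hs₀
  set φ : Fin k → Fin k := fun d => d - 1 - ((Nat.find (hex d) : ℕ) : Fin k) with hφ
  -- pigeonhole
  have hpig : ∃ s, (Sum.inr s ∉ S) ∧ s ∉ D.image φ := by
    by_contra hcon
    push_neg at hcon
    have hsub : Gc ⊆ D.image φ := by
      intro x hx
      exact hcon x (Finset.mem_filter.1 hx).2
    have := Finset.card_le_card hsub
    have := Finset.card_image_le (s := D) (f := φ)
    omega
  obtain ⟨s, hsfree, hsim⟩ := hpig
  -- the next free index t
  have ht : ∃ r : ℕ, Sum.inr (s + 1 + (r : Fin k)) ∉ S := by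
    refine ⟨((-1 : Fin k)).val, ?_⟩
    rw [Fin.cast_val_eq_self]
    have : s + 1 + (-1 : Fin k) = s := by ring
    rw [this]; exact hsfree
  set f' : ℕ := Nat.find ht with hf'
  have hf'k : f' < k := by
    have h1 : f' ≤ ((-1 : Fin k)).val := Nat.find_min' ht (by
      rw [Fin.cast_val_eq_self]
      have : s + 1 + (-1 : Fin k) = s := by ring
      rw [this]; exact hsfree)
    have := hvneg1 hk
    omega
  set t : Fin k := s + 1 + (f' : Fin k) with htdef
  have htfree : Sum.inr t ∉ S := Nat.find_spec ht
  -- the offset function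
  set o : Fin k → ℕ := fun j => (j - s - 1).val with ho
  have hcast : ∀ j : Fin k, ((o j : ℕ) : Fin k) = j - s - 1 := fun j => Fin.cast_val_eq_self _
  have holt : ∀ j, o j < k := fun j => (j - s - 1).isLt
  have hoinj : ∀ j₁ j₂ : Fin k, o j₁ = o j₂ → j₁ = j₂ := by
    intro j₁ j₂ h
    have h2 : j₁ - s - 1 = j₂ - s - 1 := by
      rw [← hcast j₁, ← hcast j₂, h]
    have := congrArg (fun x => x + s + 1) h2
    simpa using this
  have hot : o t = f' := by
    have h1 : t - s - 1 = (f' : Fin k) := by rw [htdef]; ring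
    rw [ho]; simp only [h1]
    exact Fin.val_cast_of_lt hf'k
  have hos : o s = k - 1 := by
    have h1 : s - s - 1 = (-1 : Fin k) := by ring
    rw [ho]; simp only [h1]; exact hvneg1 hk
  have hos1 : o (s + 1) = 0 := by
    have h1 : s + 1 - s - 1 = (0 : Fin k) := by ring
    rw [ho]; simp only [h1, Fin.val_zero]
  have hosucc : ∀ j : Fin k, j ≠ s → o (j + 1) = o j + 1 := by
    intro j hj
    have hne : o j ≠ k - 1 := fun h => hj (hoinj _ _ (h.trans hos.symm))
    have h1 : j + 1 - s - 1 = (j - s - 1) + 1 := by ring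
    have h2 : o (j + 1) = ((j - s - 1).val + (1 : Fin k).val) % k := by
      show (j + 1 - s - 1).val = _
      rw [h1, Fin.val_add]
    have h4 : o j = (j - s - 1).val := rfl
    rw [h2, hv1 hk, ← h4]
    have h3 := holt j
    exact Nat.mod_eq_of_lt (by omega)
  have hmin : ∀ j : Fin k, o j < f' → Sum.inr j ∈ S := by
    intro j hj
    have h1 := Nat.find_min ht hj
    rw [not_not] at h1
    have h2 : s + 1 + ((o j : ℕ) : Fin k) = j := by rw [hcast]; ring
    rwa [h2] at h1
  -- Claim 1 : every blue left-vertex lies outside the interval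
  have hDout : ∀ d : Fin k, Sum.inl d ∈ S → o t < o d := by
    intro d hd
    by_contra hle
    push_neg at hle
    have hfind : Nat.find (hex d) = o d := by
      rw [Nat.find_eq_iff]
      constructor
      · rw [hcast d]
        have : d - 1 - (d - s - 1) = s := by ring
        rw [this]; exact hsfree
      · intro r hr
        rw [not_not]
        have hrk : r + 1 < k := by have := holt d; omega
        have hcr : ((r + 1 : ℕ) : Fin k) = (r : Fin k) + 1 := by push_cast; ring
        have hid : d - 1 - (r : Fin k) - s - 1 = (d - s - 1) - ((r + 1 : ℕ) : Fin k) := by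
          rw [hcr]; ring
        have hval : o (d - 1 - (r : Fin k)) = o d - (r + 1) := by
          have h4 : o (d - 1 - (r : Fin k)) = ((d - s - 1) - ((r + 1 : ℕ) : Fin k)).val := by
            show (d - 1 - (r : Fin k) - s - 1).val = _
            rw [hid]
          have h5 : ((r + 1 : ℕ) : Fin k).val = r + 1 := Fin.val_cast_of_lt hrk
          have h6 : o d = (d - s - 1).val := rfl
          have ha : (d - s - 1).val < k := (d - s - 1).isLt
          have har : r + 1 ≤ (d - s - 1).val := by rw [← h6]; omega
          rw [h4, vsub, h5, ← h6]
          rw [h6]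
          rw [show (d - s - 1).val + (k - (r + 1)) = ((d - s - 1).val - (r + 1)) + k from by omega,
            Nat.add_mod_right, Nat.mod_eq_of_lt (by omega)]
        apply hmin
        rw [hval]
        rw [hot] at hle
        omega
    have hφd : φ d = s := by
      rw [hφ]; simp only [hfind, hcast d]
      ring
    exact hsim (Finset.mem_image.2 ⟨d, Finset.mem_filter.2 ⟨Finset.mem_univ _, hd⟩, hφd⟩)
  -- the fort
  set W : Set (Fin k ⊕ Fin k) :=
    {x | (∃ j, x = Sum.inl j ∧ o j ≤ o t) ∨ x = Sum.inr s ∨ x = Sum.inr t} with hW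
  have hWinl : ∀ a : Fin k, Sum.inl a ∈ W ↔ o a ≤ o t := by
    intro a; simp [hW]
  have hWinr : ∀ a : Fin k, Sum.inr a ∈ W ↔ a = s ∨ a = t := by
    intro a; simp [hW]
  have hsubT : ↑S ⊆ Wᶜ := by
    intro x hx
    simp only [Set.mem_compl_iff]
    cases x with
    | inl a =>
        rw [hWinl]
        have := hDout a (by simpa using hx)
        omega
    | inr a =>
        rw [hWinr]
        rintro (rfl | rfl)
        · exact hsfree (by simpa using hx)
        · exact htfree (by simpa using hx)
  have hclosed : forceStep (sunGraph k) Wᶜ ⊆ Wᶜ := by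
    rintro w (hw | ⟨u, huT, hadj, hall⟩)
    · exact hw
    by_contra hwT
    have hwW : w ∈ W := Set.not_notMem.1 (by simpa using hwT)
    have huW : u ∉ W := huT
    have hallW : ∀ x, (sunGraph k).Adj u x → x ∈ W → x = w := by
      intro x h1 h2
      exact hall x h1 (by simp [h2])
    cases u with
    | inr i =>
        rw [hWinr] at huW
        push_neg at huW
        obtain ⟨his, hit⟩ := huW
        have hoit : o i ≠ o t := fun h => hit (hoinj _ _ h)
        have hsucc : o (i + 1) = o i + 1 := hosucc i his
        have hone : o i ≤ o t ∨ o (i + 1) ≤ o t := by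
          rcases (sun_adj_inr hk i w).1 hadj with hw1 | hw1
          · left; exact (hWinl i).1 (hw1 ▸ hwW)
          · right; exact (hWinl _).1 (hw1 ▸ hwW)
        have hboth : o i ≤ o t ∧ o (i + 1) ≤ o t := by
          rcases hone with h | h <;> constructor <;> omega
        have e1 : Sum.inl i = w :=
          hallW _ ((sun_adj_inr hk i _).2 (Or.inl rfl)) ((hWinl i).2 hboth.1)
        have e2 : Sum.inl (i + 1) = w :=
          hallW _ ((sun_adj_inr hk i _).2 (Or.inr rfl)) ((hWinl _).2 hboth.2)
        rw [← e2] at e1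
        exact add_one_ne hk i (Sum.inl.inj e1).symm
    | inl j =>
        have hjo : o t < o j := by
          rw [hWinl] at huW; omega
        have hj1 : 1 ≤ o j := by omega
        have hjs1 : j ≠ s + 1 := by
          intro h; rw [h, hos1] at hjo; omega
        have P2 : Sum.inr j ∈ W ↔ j = s := by
          rw [hWinr]
          constructor
          · rintro (h | rfl)
            · exact h
            · omega
          · exact Or.inl
        have P1 : Sum.inl (j + 1) ∈ W ↔ j = s := by
          rw [hWinl]
          constructor
          · intro h
            by_contra hne
            rw [hosucc j hne] at h
            omega
          · rintro rfl
            rw [hos1]; omega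
        have hj1s : j - 1 = s → False := fun h => hjs1 (by rw [← h]; ring)
        have hjeq : o j = o (j - 1) + 1 := by
          have h := hosucc (j - 1) (fun h => hj1s h)
          rw [show j - 1 + 1 = j from by ring] at h
          omega
        have P3 : Sum.inl (j - 1) ∈ W ↔ j - 1 = t := by
          rw [hWinl]
          constructor
          · intro h
            apply hoinj
            omega
          · rintro h; rw [h]
        have P4 : Sum.inr (j - 1) ∈ W ↔ j - 1 = t := by
          rw [hWinr]
          constructor
          · rintro (h | h)
            · exact absurd h hj1s
            · exact h
          · exact Or.inr
        have hadj1 : (sunGraph k).Adj (Sum.inl j) (Sum.inl (j + 1)) :=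
          (sun_adj_inl hk j _).2 (Or.inl rfl)
        have hadj2 : (sunGraph k).Adj (Sum.inl j) (Sum.inl (j - 1)) :=
          (sun_adj_inl hk j _).2 (Or.inr (Or.inl rfl))
        have hadj3 : (sunGraph k).Adj (Sum.inl j) (Sum.inr j) :=
          (sun_adj_inl hk j _).2 (Or.inr (Or.inr (Or.inl rfl)))
        have hadj4 : (sunGraph k).Adj (Sum.inl j) (Sum.inr (j - 1)) :=
          (sun_adj_inl hk j _).2 (Or.inr (Or.inr (Or.inr rfl)))
        rcases (sun_adj_inl hk j w).1 hadj with hw1 | hw1 | hw1 | hw1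
        · have hjs : j = s := P1.1 (hw1 ▸ hwW)
          have e2 : Sum.inr j = w := hallW _ hadj3 (P2.2 hjs)
          rw [hw1] at e2; simp at e2
        · have hjt : j - 1 = t := P3.1 (hw1 ▸ hwW)
          have e2 : Sum.inr (j - 1) = w := hallW _ hadj4 (P4.2 hjt)
          rw [hw1] at e2; simp at e2
        · have hjs : j = s := P2.1 (hw1 ▸ hwW)
          have e2 : Sum.inl (j + 1) = w := hallW _ hadj1 (P1.2 hjs)
          rw [hw1] at e2; simp at e2
        · have hjt : j - 1 = t := P4.1 (hw1 ▸ hwW)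
          have e2 : Sum.inl (j - 1) = w := hallW _ hadj2 (P3.2 hjt)
          rw [hw1] at e2; simp at e2
  have := hS Wᶜ hsubT hclosed
  have htW : Sum.inl t ∈ W := (hWinl t).2 le_rfl
  have : Sum.inl t ∈ Wᶜ := this ▸ Set.mem_univ _
  exact this htW

end SunZF

/-- For the sun graph `S_k` on `n = 2k` vertices (`k ≥ 3`), the zero
forcing number equals `k = n / 2`. -/
theorem zeroForcingNumber_sunGraph (k : ℕ) (hk : 3 ≤ k) :
    zeroForcingNumber (sunGraph k) = k ∧
    zeroForcingNumber (sunGraph k) = Fintype.card (Fin k ⊕ Fin k) / 2 := by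
  haveI : NeZero k := ⟨by omega⟩
  have hmem : k ∈ {n | ∃ S : Finset (Fin k ⊕ Fin k), S.card = n ∧
      IsZeroForcingSet (sunGraph k) ↑S} :=
    ⟨SunZF.upperSet k, SunZF.upperSet_card hk, SunZF.upperSet_zfs hk⟩
  have h1 : zeroForcingNumber (sunGraph k) = k := by
    rw [zeroForcingNumber]
    apply le_antisymm
    · exact Nat.sInf_le hmem
    · apply le_csInf ⟨k, hmem⟩
      rintro n ⟨S, rfl, hS⟩
      exact SunZF.sun_lower hk S hS
  refine ⟨h1, ?_⟩
  rw [h1]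
  simp only [Fintype.card_sum, Fintype.card_fin]
  omega
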